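/- Let Φ be a positive concave function on the open unit simplex Δ, p ∈ Δ, and v ∈ ∂(log Φ)(p) with Σᵢvᵢ = 0. Define πᵢ = pᵢ(vᵢ + 1 - Σⱼ pⱼvⱼ) for i = 1,…,n. Then π = (π₁,…,πₙ) lies in the closed unit simplex, i.e. πᵢ ≥ 0 for all i and Σᵢ πᵢ = 1. -/

import Mathlib

/-- The superdifferential of a function `Ψ` on a set `S` at `p`. -/
def superdiff {n : ℕ} (S : Set (Fin n → ℝ)) (Ψ : (Fin n → ℝ) → ℝ) (p : Fin n → ℝ) :
    Set (Fin n → ℝ) :=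
  {ξ | (∑ i, ξ i = 0) ∧ ∀ q ∈ S, Ψ p + ∑ i, ξ i * (q i - p i) ≥ Ψ q}

theorem stmt_4 (n : ℕ) (hn : 2 ≤ n) (Φ : (Fin n → ℝ) → ℝ)
    (Δ : Set (Fin n → ℝ))
    (hΔ : Δ = {p | (∀ i, 0 < p i) ∧ ∑ i, p i = 1})
    (hconc : ConcaveOn ℝ Δ Φ)
    (hpos : ∀ p ∈ Δ, 0 < Φ p)
    (p : Fin n → ℝ) (hp : p ∈ Δ)
    (v : Fin n → ℝ) (hv : v ∈ superdiff Δ (fun q => Real.log (Φ q)) p)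
    (π : Fin n → ℝ)
    (hπ : ∀ i, π i = p i * (v i + 1 - ∑ j, p j * v j)) :
    (∀ i, 0 ≤ π i) ∧ ∑ i, π i = 1 := by
  obtain ⟨hvsum, hsup⟩ := hv
  have hpΔ := hp
  rw [hΔ] at hpΔ
  obtain ⟨hppos, hpsum⟩ := hpΔ
  have hnpos : (0:ℝ) < n := by exact_mod_cast lt_of_lt_of_le (by norm_num) hn
  set c : ℝ := ∑ j, p j * v j with hc
  have hcv : c = ∑ j, v j * p j := by
    simp [hc, mul_comm]
  -- Key lemma A : for every r ∈ Δ, c - 1 ≤ ∑ v j * r j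
  have keyA : ∀ r ∈ Δ, c - 1 ≤ ∑ j, v j * r j := by
    intro r hr
    have hrΔ := hr
    rw [hΔ] at hrΔ
    have hΦp := hpos p hp
    have hΦr := hpos r hr
    have step : ∀ t : ℝ, 0 < t → t < 1 →
        -((1-t)⁻¹) ≤ (∑ j, v j * r j) - ∑ j, v j * p j := by
      intro t ht0 ht1
      have h1t : (0:ℝ) < 1 - t := by linarith
      set q : Fin n → ℝ := fun i => (1-t) * p i + t * r i with hq
      have hqΔ : q ∈ Δ := by
        rw [hΔ]
        refine ⟨fun i => ?_, ?_⟩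
        · have h1 : 0 < (1-t) * p i := mul_pos h1t (hppos i)
          have h2 : 0 < t * r i := mul_pos ht0 (hrΔ.1 i)
          simp only [hq]
          linarith
        · simp only [hq]
          rw [Finset.sum_add_distrib, ← Finset.mul_sum, ← Finset.mul_sum, hpsum, hrΔ.2]
          ring
      have hqe : q = (1-t) • p + t • r := by
        funext i
        simp [hq]
      have hconcq : (1-t) * Φ p + t * Φ r ≤ Φ q := by
        have := hconc.2 hp hr (le_of_lt h1t) (le_of_lt ht0) (by ring)
        rw [hqe]
        simpa using this
      have hΦqpos : 0 < (1-t) * Φ p := mul_pos h1t hΦp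
      have hlog1 : Real.log ((1-t) * Φ p) ≤ Real.log (Φ q) := by
        apply Real.log_le_log hΦqpos
        nlinarith [mul_pos ht0 hΦr]
      have hlog2 : Real.log ((1-t) * Φ p) = Real.log (1-t) + Real.log (Φ p) :=
        Real.log_mul (ne_of_gt h1t) (ne_of_gt hΦp)
      have hsupq := hsup q hqΔ
      have hsumeq : ∑ i, v i * (q i - p i) = t * ((∑ j, v j * r j) - ∑ j, v j * p j) := by
        rw [mul_sub, Finset.mul_sum, Finset.mul_sum, ← Finset.sum_sub_distrib]
        apply Finset.sum_congr rfl
        intro i _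
        simp only [hq]
        ring
      have hkey : Real.log (1-t) ≤ t * ((∑ j, v j * r j) - ∑ j, v j * p j) := by
        rw [← hsumeq]
        have := hsupq
        simp only [ge_iff_le] at this
        linarith [hlog1, hlog2 ▸ hlog1]
      -- log (1-t) ≥ 1 - (1-t)⁻¹
      have hloglb : 1 - (1-t)⁻¹ ≤ Real.log (1-t) := by
        have h := Real.log_le_sub_one_of_pos (show (0:ℝ) < (1-t)⁻¹ by positivity)
        rw [Real.log_inv] at h
        linarith
      have hinv : (1-t) * (1-t)⁻¹ = 1 := mul_inv_cancel₀ (ne_of_gt h1t)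
      nlinarith [hkey, hloglb, hinv, ht0, mul_pos ht0 h1t]
    -- take limit t → 0
    have : ∀ ε > (0:ℝ), c - 1 ≤ (∑ j, v j * r j) + ε := by
      intro ε hε
      have ht0 : (0:ℝ) < ε / (1 + ε) := by positivity
      have ht1 : ε / (1 + ε) < 1 := by
        rw [div_lt_one (by linarith)]
        linarith
      have h1t : 1 - ε/(1+ε) = 1/(1+ε) := by
        field_simp
        ring
      have hinveq : (1 - ε/(1+ε))⁻¹ = 1 + ε := by
        rw [h1t]
        rw [one_div, inv_inv]
      have := step (ε/(1+ε)) ht0 ht1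
      rw [hinveq, ← hcv] at this
      linarith
    exact le_of_forall_pos_le_add this
  -- Key lemma B : c - 1 ≤ v i
  have keyB : ∀ i, c - 1 ≤ v i := by
    intro i
    have : ∀ δ > (0:ℝ), c - 1 ≤ v i + δ := by
      intro δ hδ
      set ε : ℝ := min (δ/(|v i|+1)) (1/2) with hε
      have hε0 : 0 < ε := lt_min (by positivity) (by norm_num)
      have hεhalf : ε ≤ 1/2 := min_le_right _ _
      have hε1 : ε * (|v i| + 1) ≤ δ := by
        rw [← le_div_iff₀ (by positivity)]
        exact min_le_left _ _
      set r : Fin n → ℝ := fun j => (1-ε) * (if j = i then 1 else 0) + ε * (1/n) with hr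
      have hrΔ : r ∈ Δ := by
        rw [hΔ]
        refine ⟨fun j => ?_, ?_⟩
        · have h2 : 0 < ε * (1/(n:ℝ)) := by positivity
          by_cases hji : j = i
          · simp only [hr, hji, if_pos rfl, if_true, mul_one]
            linarith
          · simp only [hr, if_neg hji]
            linarith
        · simp only [hr]
          rw [Finset.sum_add_distrib, ← Finset.mul_sum, ← Finset.mul_sum]
          rw [Finset.sum_ite_eq' Finset.univ i (fun _ => (1:ℝ))]
          simp only [Finset.mem_univ, if_pos]
          rw [Finset.sum_const, Finset.card_univ, Fintype.card_fin, nsmul_eq_mul]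
          field_simp
          ring
      have hvr : ∑ j, v j * r j = (1-ε) * v i := by
        simp only [hr]
        have : ∀ j, v j * ((1-ε) * (if j = i then 1 else 0) + ε * (1/n))
            = (1-ε) * ((if j = i then v j else 0)) + (ε * (1/n)) * v j := by
          intro j
          by_cases hji : j = i <;> simp [hji] <;> ring
        rw [Finset.sum_congr rfl (fun j _ => this j)]
        rw [Finset.sum_add_distrib, ← Finset.mul_sum, ← Finset.mul_sum]
        rw [Finset.sum_ite_eq' Finset.univ i v]
        simp [hvsum]
      have hA := keyA r hrΔ
      rw [hvr] at hA
      nlinarith [mul_le_mul_of_nonneg_left (neg_abs_le (v i)) hε0.le, hε0.le,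
        abs_nonneg (v i)]
    exact le_of_forall_pos_le_add this
  constructor
  · intro i
    rw [hπ i]
    have h1 := keyB i
    have h2 := hppos i
    nlinarith
  · have : ∀ i, π i = p i * v i + p i * (1 - c) := by
      intro i
      rw [hπ i]
      ring
    rw [Finset.sum_congr rfl (fun i _ => this i)]
    rw [Finset.sum_add_distrib, ← hc, ← Finset.sum_mul, hpsum]
    ring
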